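/- For all real numbers a₁₁, a₁₂, a₂₁, a₂₂, v₁, v₂, h₃₁, h₃₂, h₃₃, the determinant of the 3×3 matrix with rows (a₁₁, a₁₂, v₁), (a₂₁, a₂₂, v₂), (h₃₁, h₃₂, h₃₃) satisfies det ≤ (1/2)·√(h₃₁² + h₃₂² + h₃₃²)·(a₁₁² + a₁₂² + a₂₁² + a₂₂² + v₁² + v₂²). -/
import Mathlib

/-- Cauchy–Schwarz in ℝ³, sqrt form. -/
lemma cs3 (h1 h2 h3 c1 c2 c3 : ℝ) :
    h1 * c1 + h2 * c2 + h3 * c3 ≤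
      Real.sqrt (h1 ^ 2 + h2 ^ 2 + h3 ^ 2) * Real.sqrt (c1 ^ 2 + c2 ^ 2 + c3 ^ 2) := by
  have key : (h1 * c1 + h2 * c2 + h3 * c3) ^ 2 ≤
      (h1 ^ 2 + h2 ^ 2 + h3 ^ 2) * (c1 ^ 2 + c2 ^ 2 + c3 ^ 2) := by
    nlinarith [sq_nonneg (h1*c2 - h2*c1), sq_nonneg (h1*c3 - h3*c1), sq_nonneg (h2*c3 - h3*c2)]
  calc h1 * c1 + h2 * c2 + h3 * c3 ≤ |h1 * c1 + h2 * c2 + h3 * c3| := le_abs_self _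
    _ = Real.sqrt ((h1 * c1 + h2 * c2 + h3 * c3) ^ 2) := (Real.sqrt_sq_eq_abs _).symm
    _ ≤ Real.sqrt ((h1 ^ 2 + h2 ^ 2 + h3 ^ 2) * (c1 ^ 2 + c2 ^ 2 + c3 ^ 2)) :=
        Real.sqrt_le_sqrt key
    _ = _ := Real.sqrt_mul (by positivity) _

/-- For all real numbers `a₁₁, a₁₂, a₂₁, a₂₂, v₁, v₂, h₃₁, h₃₂, h₃₃`, the determinant of the
3×3 matrix with rows `(a₁₁, a₁₂, v₁)`, `(a₂₁, a₂₂, v₂)`, `(h₃₁, h₃₂, h₃₃)` satisfies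
`det ≤ (1/2)·√(h₃₁² + h₃₂² + h₃₃²)·(a₁₁² + a₁₂² + a₂₁² + a₂₂² + v₁² + v₂²)`. -/
theorem det_le_norm_mul_sum_sq (a₁₁ a₁₂ a₂₁ a₂₂ v₁ v₂ h₃₁ h₃₂ h₃₃ : ℝ) :
    (Matrix.det !![a₁₁, a₁₂, v₁; a₂₁, a₂₂, v₂; h₃₁, h₃₂, h₃₃]) ≤
      (1 / 2) * Real.sqrt (h₃₁ ^ 2 + h₃₂ ^ 2 + h₃₃ ^ 2)
        * (a₁₁ ^ 2 + a₁₂ ^ 2 + a₂₁ ^ 2 + a₂₂ ^ 2 + v₁ ^ 2 + v₂ ^ 2) := by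
  have hdet : Matrix.det !![a₁₁, a₁₂, v₁; a₂₁, a₂₂, v₂; h₃₁, h₃₂, h₃₃] =
      h₃₁ * (a₁₂ * v₂ - v₁ * a₂₂) + h₃₂ * (v₁ * a₂₁ - a₁₁ * v₂) +
      h₃₃ * (a₁₁ * a₂₂ - a₁₂ * a₂₁) := by
    simp [Matrix.det_fin_three]; ring
  set c1 := a₁₂ * v₂ - v₁ * a₂₂
  set c2 := v₁ * a₂₁ - a₁₁ * v₂
  set c3 := a₁₁ * a₂₂ - a₁₂ * a₂₁
  set Q := a₁₁ ^ 2 + a₁₂ ^ 2 + a₂₁ ^ 2 + a₂₂ ^ 2 + v₁ ^ 2 + v₂ ^ 2 with hQdef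
  have hcs := cs3 h₃₁ h₃₂ h₃₃ c1 c2 c3
  have hc : Real.sqrt (c1 ^ 2 + c2 ^ 2 + c3 ^ 2) ≤ (1 / 2) * Q := by
    have h1 : c1 ^ 2 + c2 ^ 2 + c3 ^ 2 ≤ ((1 / 2) * Q) ^ 2 := by
      have hl := sq_nonneg (a₁₁ * a₂₁ + a₁₂ * a₂₂ + v₁ * v₂)
      have hg := sq_nonneg ((a₁₁ ^ 2 + a₁₂ ^ 2 + v₁ ^ 2) - (a₂₁ ^ 2 + a₂₂ ^ 2 + v₂ ^ 2))
      simp only [hQdef]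
      nlinarith [hl, hg]
    calc Real.sqrt (c1 ^ 2 + c2 ^ 2 + c3 ^ 2) ≤ Real.sqrt (((1 / 2) * Q) ^ 2) :=
          Real.sqrt_le_sqrt h1
      _ = (1 / 2) * Q := Real.sqrt_sq (by positivity)
  rw [hdet]
  calc h₃₁ * c1 + h₃₂ * c2 + h₃₃ * c3 ≤
      Real.sqrt (h₃₁ ^ 2 + h₃₂ ^ 2 + h₃₃ ^ 2) * Real.sqrt (c1 ^ 2 + c2 ^ 2 + c3 ^ 2) := hcs
    _ ≤ Real.sqrt (h₃₁ ^ 2 + h₃₂ ^ 2 + h₃₃ ^ 2) * ((1 / 2) * Q) :=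
        mul_le_mul_of_nonneg_left hc (Real.sqrt_nonneg _)
    _ = (1 / 2) * Real.sqrt (h₃₁ ^ 2 + h₃₂ ^ 2 + h₃₃ ^ 2) * Q := by ring
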